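/- arXiv:2003.11185 — 3 statements merged into one kernel-verified Lean document; each statement's English description precedes it below -/
import Mathlib

section
/- Let u be a locally integrable function on ℝ² that is continuous at a point x₀ ∈ ℝ², let r > 0 and κ ∈ (0,1). For ρ > 0 set a(ρ) := ⨍_{B(x₀,ρ)} u and φ(ρ) := ⨍_{B(x₀,ρ)} |u − a(ρ)|. If ∑_{j=0}^∞ φ(κ^j r) < ∞, then |u(x₀) − a(r)| ≤ (1 + κ^{-2}) ∑_{j=0}^∞ φ(κ^j r). -/
open MeasureTheory Metric

set_option maxHeartbeats 1000000

private lemma abs_setAverage_le {α : Type*} [MeasurableSpace α] (μ : Measure α)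
    (s : Set α) (f : α → ℝ) : |⨍ y in s, f y ∂μ| ≤ ⨍ y in s, |f y| ∂μ := by
  rw [setAverage_eq, setAverage_eq, smul_eq_mul, smul_eq_mul, abs_mul,
    abs_of_nonneg (inv_nonneg.2 measureReal_nonneg : (0:ℝ) ≤ (μ.real s)⁻¹)]
  gcongr
  simpa [Real.norm_eq_abs] using norm_integral_le_integral_norm (μ := μ.restrict s) f

private lemma ball_int (u : EuclideanSpace ℝ (Fin 2) → ℝ) (hu : LocallyIntegrable u volume)
    (x : EuclideanSpace ℝ (Fin 2)) (ρ : ℝ) : IntegrableOn u (ball x ρ) volume :=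
  (hu.integrableOn_isCompact (isCompact_closedBall x ρ)).mono_set ball_subset_closedBall

private lemma key_est (u : EuclideanSpace ℝ (Fin 2) → ℝ) (hu : LocallyIntegrable u volume)
    (x₀ : EuclideanSpace ℝ (Fin 2)) {κ ρ : ℝ} (hκ0 : 0 < κ) (hκ1 : κ < 1) (hρ : 0 < ρ) :
    |(⨍ y in ball x₀ (κ * ρ), u y) - ⨍ y in ball x₀ ρ, u y| ≤
      κ⁻¹ ^ 2 * ⨍ y in ball x₀ ρ, |u y - ⨍ z in ball x₀ ρ, u z| := by
  set c : ℝ := ⨍ z in ball x₀ ρ, u z with hc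
  have hκρ : 0 < κ * ρ := mul_pos hκ0 hρ
  set s := ball x₀ (κ * ρ)
  set t := ball x₀ ρ
  have hst : s ⊆ t := ball_subset_ball (by nlinarith)
  have hμs0 : volume s ≠ 0 := (measure_ball_pos volume x₀ hκρ).ne'
  have hμsT : volume s ≠ ⊤ := measure_ball_lt_top.ne
  have hμtT : volume t ≠ ⊤ := measure_ball_lt_top.ne
  have hvols : volume s = ENNReal.ofReal ((κ * ρ) ^ 2) * volume (ball (0:EuclideanSpace ℝ (Fin 2)) 1) := by
    have := Measure.addHaar_ball (volume : Measure (EuclideanSpace ℝ (Fin 2))) x₀ hκρ.le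
    simpa only [finrank_euclideanSpace, Fintype.card_fin] using this
  have hvolt : volume t = ENNReal.ofReal (ρ ^ 2) * volume (ball (0:EuclideanSpace ℝ (Fin 2)) 1) := by
    have := Measure.addHaar_ball (volume : Measure (EuclideanSpace ℝ (Fin 2))) x₀ hρ.le
    simpa only [finrank_euclideanSpace, Fintype.card_fin] using this
  set c0 : ℝ := (volume (ball (0:EuclideanSpace ℝ (Fin 2)) 1)).toReal with hc0
  have hc0pos : 0 < c0 := ENNReal.toReal_pos (measure_ball_pos volume 0 one_pos).ne'
    measure_ball_lt_top.ne
  have hμsR : (volume s).toReal = (κ * ρ) ^ 2 * c0 := by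
    rw [hvols, ENNReal.toReal_mul, ENNReal.toReal_ofReal (by positivity)]
  have hμtR : (volume t).toReal = ρ ^ 2 * c0 := by
    rw [hvolt, ENNReal.toReal_mul, ENNReal.toReal_ofReal (by positivity)]
  have hμspos : 0 < (volume s).toReal := ENNReal.toReal_pos hμs0 hμsT
  have hμtpos : 0 < (volume t).toReal := by rw [hμtR]; positivity
  -- integrability
  have hus : IntegrableOn u s volume := ball_int u hu x₀ _
  have hut : IntegrableOn u t volume := ball_int u hu x₀ _
  have husc : IntegrableOn (fun y => u y - c) s volume := hus.sub (integrableOn_const measure_ball_lt_top.ne)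
  have hutc : IntegrableOn (fun y => u y - c) t volume := hut.sub (integrableOn_const measure_ball_lt_top.ne)
  have step1 : (⨍ y in s, u y) - c = ⨍ y in s, (u y - c) := by
    rw [setAverage_eq, setAverage_eq, integral_sub hus (integrableOn_const measure_ball_lt_top.ne),
      integral_const, smul_eq_mul, smul_eq_mul, mul_sub]
    congr 1
    simp only [smul_eq_mul, measureReal_def, Measure.restrict_apply_univ]
    field_simp
  have step2 : |⨍ y in s, (u y - c)| ≤ ⨍ y in s, |u y - c| :=
    abs_setAverage_le volume s _
  have step3 : (⨍ y in s, |u y - c|) ≤ (volume s).toReal⁻¹ * ∫ y in t, |u y - c| := by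
    rw [setAverage_eq, smul_eq_mul, measureReal_def]
    refine mul_le_mul_of_nonneg_left ?_ (inv_nonneg.2 ENNReal.toReal_nonneg)
    exact setIntegral_mono_set hutc.abs (ae_of_all _ fun y => abs_nonneg _)
      (ae_of_all _ hst)
  have step4 : (volume s).toReal⁻¹ * ∫ y in t, |u y - c| =
      ((volume t).toReal / (volume s).toReal) * ⨍ y in t, |u y - c| := by
    rw [setAverage_eq, smul_eq_mul, measureReal_def]
    field_simp
  have hratio : (volume t).toReal / (volume s).toReal = κ⁻¹ ^ 2 := by
    rw [hμtR, hμsR]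
    field_simp
  have habsavg : 0 ≤ ⨍ y in t, |u y - c| := by
    rw [setAverage_eq, smul_eq_mul]
    positivity
  calc |(⨍ y in s, u y) - c| = |⨍ y in s, (u y - c)| := by rw [step1]
    _ ≤ ⨍ y in s, |u y - c| := step2
    _ ≤ (volume s).toReal⁻¹ * ∫ y in t, |u y - c| := step3
    _ = κ⁻¹ ^ 2 * ⨍ y in t, |u y - c| := by rw [step4, hratio]

theorem stmt_5 (u : EuclideanSpace ℝ (Fin 2) → ℝ)
    (hu : LocallyIntegrable u volume)
    (x₀ : EuclideanSpace ℝ (Fin 2)) (hcont : ContinuousAt u x₀)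
    (r κ : ℝ) (hr : 0 < r) (hκ : κ ∈ Set.Ioo (0:ℝ) 1)
    (a φ : ℝ → ℝ)
    (ha : ∀ ρ : ℝ, a ρ = ⨍ y in Metric.ball x₀ ρ, u y)
    (hφ : ∀ ρ : ℝ, φ ρ = ⨍ y in Metric.ball x₀ ρ, |u y - a ρ|)
    (hsum : Summable (fun j : ℕ => φ (κ ^ j * r))) :
    |u x₀ - a r| ≤ (1 + κ⁻¹ ^ 2) * ∑' j : ℕ, φ (κ ^ j * r) := by
  obtain ⟨hκ0, hκ1⟩ := hκ
  have hρpos : ∀ j : ℕ, 0 < κ ^ j * r := fun j => mul_pos (pow_pos hκ0 j) hr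
  -- term estimate
  set f : ℕ → ℝ := fun j => a (κ ^ (j + 1) * r) - a (κ ^ j * r) with hf
  have hfle : ∀ j, |f j| ≤ κ⁻¹ ^ 2 * φ (κ ^ j * r) := by
    intro j
    have h := key_est u hu x₀ hκ0 hκ1 (hρpos j)
    rw [hf]
    simp only
    rw [ha, ha, hφ, ha]
    have : κ ^ (j + 1) * r = κ * (κ ^ j * r) := by ring
    rw [this]
    exact h
  -- nonnegativity of φ terms
  have hφnn : ∀ ρ : ℝ, 0 ≤ φ ρ := by
    intro ρ
    rw [hφ, setAverage_eq, smul_eq_mul]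
    positivity
  -- summability of f
  have hg : Summable (fun j : ℕ => κ⁻¹ ^ 2 * φ (κ ^ j * r)) := hsum.mul_left _
  have hfs : Summable f := by
    apply Summable.of_norm_bounded hg
    intro j
    simpa using hfle j
  -- partial sums telescope
  have htel : ∀ n : ℕ, ∑ j ∈ Finset.range n, f j = a (κ ^ n * r) - a (κ ^ 0 * r) :=
    fun n => Finset.sum_range_sub (fun j => a (κ ^ j * r)) n
  -- convergence of averages to u x₀
  have hconv : Filter.Tendsto (fun n : ℕ => a (κ ^ n * r)) Filter.atTop (nhds (u x₀)) := by
    rw [Metric.tendsto_atTop]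
    intro ε hε
    obtain ⟨δ, hδ0, hδ⟩ := Metric.continuousAt_iff.1 hcont (ε / 2) (half_pos hε)
    have hκr : Filter.Tendsto (fun n : ℕ => κ ^ n * r) Filter.atTop (nhds 0) := by
      simpa using (tendsto_pow_atTop_nhds_zero_of_lt_one hκ0.le hκ1).mul_const r
    obtain ⟨N, hN⟩ := (Metric.tendsto_atTop.1 hκr) δ hδ0
    refine ⟨N, fun n hn => ?_⟩
    have hρδ : κ ^ n * r < δ := by
      have := hN n hn
      rw [Real.dist_eq, sub_zero, abs_of_pos (hρpos n)] at this
      exact this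
    set ρ := κ ^ n * r
    have hball : ball x₀ ρ ⊆ ball x₀ δ := ball_subset_ball hρδ.le
    have hμpos : 0 < (volume (ball x₀ ρ)).toReal :=
      ENNReal.toReal_pos (measure_ball_pos volume x₀ (hρpos n)).ne' measure_ball_lt_top.ne
    have hbd : ∀ y ∈ ball x₀ ρ, |u y - u x₀| ≤ ε / 2 := fun y hy =>
      le_of_lt (hδ (hball hy))
    have hint : IntegrableOn u (ball x₀ ρ) volume := ball_int u hu x₀ _
    have hintc : IntegrableOn (fun y => u y - u x₀) (ball x₀ ρ) volume :=
      hint.sub (integrableOn_const measure_ball_lt_top.ne)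
    have key : |a ρ - u x₀| ≤ ε / 2 := by
      rw [ha]
      have e1 : (⨍ y in ball x₀ ρ, u y) - u x₀ = ⨍ y in ball x₀ ρ, (u y - u x₀) := by
        rw [setAverage_eq, setAverage_eq, integral_sub hint (integrableOn_const measure_ball_lt_top.ne),
          integral_const, smul_eq_mul, smul_eq_mul, mul_sub]
        congr 1
        simp only [smul_eq_mul, measureReal_def, Measure.restrict_apply_univ]
        field_simp
      rw [e1]
      calc |⨍ y in ball x₀ ρ, (u y - u x₀)| ≤ ⨍ y in ball x₀ ρ, |u y - u x₀| :=
            abs_setAverage_le volume _ _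
        _ ≤ ⨍ _y in ball x₀ ρ, (ε / 2) := by
            rw [setAverage_eq, setAverage_eq, smul_eq_mul, smul_eq_mul]
            refine mul_le_mul_of_nonneg_left ?_ (inv_nonneg.2 measureReal_nonneg)
            exact setIntegral_mono_on hintc.abs
              (integrableOn_const measure_ball_lt_top.ne) measurableSet_ball hbd
        _ = ε / 2 := by
            rw [setAverage_eq, smul_eq_mul, integral_const, smul_eq_mul]
            simp only [measureReal_def, Measure.restrict_apply_univ]
            field_simp
    rw [Real.dist_eq]
    calc |a ρ - u x₀| ≤ ε / 2 := key
      _ < ε := half_lt_self hε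
  -- identify tsum f
  have hps : Filter.Tendsto (fun n : ℕ => ∑ j ∈ Finset.range n, f j) Filter.atTop
      (nhds (u x₀ - a (κ ^ 0 * r))) := by
    simp only [htel]
    exact hconv.sub_const _
  have hsum_eq : ∑' j, f j = u x₀ - a (κ ^ 0 * r) :=
    tendsto_nhds_unique hfs.hasSum.tendsto_sum_nat hps
  have h0 : κ ^ 0 * r = r := by simp
  have hφtsum_nn : 0 ≤ ∑' j : ℕ, φ (κ ^ j * r) := tsum_nonneg fun j => hφnn _
  have hbound : |u x₀ - a r| ≤ κ⁻¹ ^ 2 * ∑' j : ℕ, φ (κ ^ j * r) := by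
    have hsum_eq' : ∑' j, f j = u x₀ - a r := by rw [hsum_eq, h0]
    rw [← hsum_eq']
    calc |∑' j, f j| ≤ ∑' j, |f j| := by
          have := norm_tsum_le_tsum_norm (f := f) (by simpa using hfs.abs)
          simpa using this
      _ ≤ ∑' j, κ⁻¹ ^ 2 * φ (κ ^ j * r) := Summable.tsum_le_tsum hfle (hfs.abs) hg
      _ = κ⁻¹ ^ 2 * ∑' j, φ (κ ^ j * r) := tsum_mul_left
  calc |u x₀ - a r| ≤ κ⁻¹ ^ 2 * ∑' j : ℕ, φ (κ ^ j * r) := hbound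
    _ ≤ (1 + κ⁻¹ ^ 2) * ∑' j : ℕ, φ (κ ^ j * r) := by nlinarith
end

section
/- There is an absolute constant C with the following property: let x ∈ ℝ², C₀ > 0, and let g : ℝ² \ {x} → ℝ satisfy |g(y) − g(y')| ≤ C₀ |y−y'| / |x−y| whenever y, y' ≠ x, |y−y'| ≤ (1/2)|x−y|, and |x−y| ≤ |x−y'|. Then for all y, y' ≠ x with |x−y| ≤ |x−y'|, one has |g(y) − g(y')| ≤ C C₀ |y−y'| / |x−y|. -/
open Complex

/-- Telescoping chain bound. -/
lemma my_chain_bound (f : ℕ → ℝ) (B : ℝ) :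
    ∀ n : ℕ, (∀ j, j < n → |f j - f (j+1)| ≤ B) → |f 0 - f n| ≤ n * B := by
  intro n
  induction n with
  | zero => intro _; simp
  | succ n ih =>
    intro h
    have h1 := ih (fun j hj => h j (hj.trans (Nat.lt_succ_self n)))
    have h2 := h n (Nat.lt_succ_self n)
    have h3 : |f 0 - f (n+1)| ≤ |f 0 - f n| + |f n - f (n+1)| := abs_sub_le _ _ _
    push_cast
    linarith

/-- Modulus of a positive rescaling. -/
lemma my_abs_rescale (z' : ℂ) (b : ℝ) (hb : 0 < b) (hR : 0 < ‖z'‖) :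
    ‖((b / ‖z'‖ : ℝ) • z')‖ = b := by
  rw [norm_smul, Real.norm_eq_abs, abs_div,
    abs_of_pos hb, abs_of_pos hR, div_mul_cancel₀]
  exact hR.ne'

/-- Radial chain estimate. -/
lemma my_radial (C₀ : ℝ) (hC₀ : 0 < C₀) (G : ℂ → ℝ)
    (H : ∀ z z' : ℂ, z ≠ 0 → z' ≠ 0 → ‖(z - z')‖ ≤ 1/2 * ‖z‖ →
      ‖z‖ ≤ ‖z'‖ →
      |G z - G z'| ≤ C₀ * ‖(z - z')‖ / ‖z‖)
    (z' : ℂ) (r : ℝ) (hr : 0 < r) (hrR : r ≤ ‖z'‖) :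
    ∀ n : ℕ, ∀ a : ℝ, r ≤ a → a ≤ r * (3/2)^n →
      |G ((a / ‖z'‖ : ℝ) • z') - G ((r / ‖z'‖ : ℝ) • z')| ≤ n * (C₀/2) := by
  have hR : 0 < ‖z'‖ := lt_of_lt_of_le hr hrR
  intro n
  induction n with
  | zero =>
    intro a h1 h2
    simp only [pow_zero, mul_one] at h2
    have : a = r := le_antisymm h2 h1
    rw [this]; simp
  | succ n ih =>
    intro a h1 h2
    have ha : 0 < a := lt_of_lt_of_le hr h1
    set a' := max r (2*a/3) with ha'def
    have ha' : r ≤ a' := le_max_left _ _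
    have ha'pos : 0 < a' := lt_of_lt_of_le hr ha'
    have ha'a : a' ≤ a := max_le h1 (by linarith)
    have hstep : a - a' ≤ a'/2 := by
      rcases le_or_gt r (2*a/3) with h | h
      · have : a' = 2*a/3 := max_eq_right h
        rw [this]; linarith
      · have : a' = r := max_eq_left h.le
        rw [this]; linarith
    have ha'n : a' ≤ r * (3/2)^n := by
      apply max_le
      · have h1n : (1:ℝ) ≤ (3/2)^n := one_le_pow₀ (by norm_num)
        nlinarith
      · have hp : (3/2:ℝ)^(n+1) = (3/2)^n * (3/2) := pow_succ _ _
        nlinarith [pow_pos (by norm_num : (0:ℝ) < 3/2) n]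
    set p := ((a / ‖z'‖ : ℝ) • z') with hp
    set q := ((a' / ‖z'‖ : ℝ) • z') with hq
    have habsp : ‖p‖ = a := my_abs_rescale z' a ha hR
    have habsq : ‖q‖ = a' := my_abs_rescale z' a' ha'pos hR
    have hqp : ‖(q - p)‖ = a - a' := by
      have hdiff : q - p = (((a' - a) / ‖z'‖ : ℝ)) • z' := by
        rw [hq, hp, ← sub_smul]; congr 1; ring
      rw [hdiff, norm_smul, Real.norm_eq_abs, abs_div,
        abs_of_pos hR, div_mul_cancel₀ _ hR.ne']
      rw [abs_of_nonpos (by linarith)]; ring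
    have hp0 : p ≠ 0 := by
      intro hc; rw [hc] at habsp; simp at habsp; linarith
    have hq0 : q ≠ 0 := by
      intro hc; rw [hc] at habsq; simp at habsq; linarith
    have key := H q p hq0 hp0 (by rw [hqp, habsq]; linarith) (by rw [habsp, habsq]; exact ha'a)
    have key2 : |G q - G p| ≤ C₀/2 := by
      refine le_trans key ?_
      rw [hqp, habsq, div_le_iff₀ ha'pos]
      nlinarith
    have ihq := ih a' ha' ha'n
    calc |G p - G ((r / ‖z'‖ : ℝ) • z')|
        ≤ |G p - G q| + |G q - G ((r / ‖z'‖ : ℝ) • z')| := abs_sub_le _ _ _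
      _ ≤ C₀/2 + n * (C₀/2) := add_le_add (by rwa [abs_sub_comm] at key2) ihq
      _ = (n+1 : ℕ) * (C₀/2) := by push_cast; ring

set_option maxHeartbeats 1000000 in
/-- The key lemma, in the complex plane with singularity at the origin. -/
lemma my_key (C₀ : ℝ) (hC₀ : 0 < C₀) (G : ℂ → ℝ)
    (H : ∀ z z' : ℂ, z ≠ 0 → z' ≠ 0 → ‖(z - z')‖ ≤ 1/2 * ‖z‖ →
      ‖z‖ ≤ ‖z'‖ →
      |G z - G z'| ≤ C₀ * ‖(z - z')‖ / ‖z‖) :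
    ∀ z z' : ℂ, z ≠ 0 → z' ≠ 0 → ‖z‖ ≤ ‖z'‖ →
      |G z - G z'| ≤ 100 * C₀ * ‖(z - z')‖ / ‖z‖ := by
  intro z z' hz hz' hle
  set r := ‖z‖ with hrdef
  have hr : 0 < r := norm_pos_iff.mpr hz
  set d := ‖(z - z')‖ with hddef
  have hd0 : 0 ≤ d := norm_nonneg _
  by_cases hcase : d ≤ 1/2 * r
  · have h1 := H z z' hz hz' hcase hle
    refine le_trans h1 ?_
    rw [div_le_div_iff₀ hr hr]
    have hde : ‖(z - z')‖ = d := hddef.symm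
    rw [hde]
    nlinarith [mul_nonneg (mul_nonneg hC₀.le hd0) hr.le]
  · push_neg at hcase
    set R := ‖z'‖ with hRdef
    have hR : 0 < R := norm_pos_iff.mpr hz'
    have hRle : R ≤ r + d := by
      have h1 : ‖z'‖ - ‖z‖ ≤ ‖(z' - z)‖ := by
        simpa using norm_sub_norm_le z' z
      have h2 : ‖(z' - z)‖ = d := (norm_sub_rev z' z).trans hddef.symm
      rw [h2] at h1
      simp only [hRdef, hrdef] at *
      linarith
    set t := d / r with htdef
    have ht : 1/2 < t := by rw [htdef, lt_div_iff₀ hr]; linarith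
    have htpos : 0 < t := by linarith
    -- the point z'' on the circle of radius r, on the ray through z'
    set z'' := ((r / R : ℝ) • z') with hz''def
    have habsz'' : ‖z''‖ = r := my_abs_rescale z' r hr hR
    have hz''0 : z'' ≠ 0 := by
      intro hc; rw [hc] at habsz''; simp at habsz''; linarith
    -- radial part
    set n := ⌈2 * t⌉₊ with hndef
    have hn1 : 2 * t ≤ (n : ℝ) := Nat.le_ceil _
    have hn2 : (n : ℝ) ≤ 2 * t + 1 := le_of_lt (Nat.ceil_lt_add_one (by linarith))
    have hpow : (1 : ℝ) + n * (1/2) ≤ (3/2)^n := by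
      have := one_add_mul_le_pow (by norm_num : (-2:ℝ) ≤ 1/2) n
      exact le_of_le_of_eq this (by norm_num)
    have hRn : R ≤ r * (3/2)^n := by
      have : r + d ≤ r * (3/2)^n := by
        have hd : d = t * r := by rw [htdef]; field_simp
        nlinarith
      linarith
    have hradial : |G z' - G z''| ≤ n * (C₀/2) := by
      have := my_radial C₀ hC₀ G H z' r hr hle n R
        (by linarith) hRn
      have hz'eq : ((R / R : ℝ) • z') = z' := by
        rw [div_self hR.ne', one_smul]
      rw [← hRdef] at this
      rw [hz'eq] at this
      exact this
    -- angular part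
    set θ := Complex.arg (z'' / z) with hθdef
    have hθpi : |θ| ≤ Real.pi := Complex.abs_arg_le_pi _
    have habsdiv : ‖(z'' / z)‖ = 1 := by
      rw [norm_div, habsz'', ← hrdef, div_self hr.ne']
    set w : ℕ → ℂ := fun j => z * Complex.exp ((((j : ℝ) * θ / 16 : ℝ) : ℂ) * Complex.I)
      with hwdef
    have habsw : ∀ j, ‖(w j)‖ = r := by
      intro j
      rw [hwdef]
      simp only [norm_mul, Complex.norm_exp_ofReal_mul_I, mul_one, ← hrdef]
    have hw0 : w 0 = z := by simp [hwdef]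
    have hw16 : w 16 = z'' := by
      have h1 : ((16 : ℕ) : ℝ) * θ / 16 = θ := by norm_num
      have h2 : Complex.exp ((θ : ℂ) * Complex.I) = z'' / z := by
        have := Complex.norm_mul_exp_arg_mul_I (z'' / z)
        rwa [habsdiv, Complex.ofReal_one, one_mul, ← hθdef] at this
      rw [hwdef]
      simp only [h1, h2]
      field_simp
    have hwstep : ∀ j : ℕ, ‖(w j - w (j+1))‖ ≤ 1/2 * r := by
      intro j
      have hsplit : w (j+1) = w j * Complex.exp (((θ / 16 : ℝ) : ℂ) * Complex.I) := by
        rw [hwdef]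
        simp only
        rw [mul_assoc, ← Complex.exp_add]
        congr 2
        push_cast
        ring
      have : w j - w (j+1) = w j * (1 - Complex.exp (((θ / 16 : ℝ) : ℂ) * Complex.I)) := by
        rw [hsplit]; ring
      rw [this, norm_mul, habsw]
      have harg : ‖(((θ / 16 : ℝ) : ℂ) * Complex.I)‖ = |θ| / 16 := by
        rw [norm_mul, Complex.norm_I, mul_one, Complex.norm_real, Real.norm_eq_abs, abs_div]
        norm_num
      have hexp : ‖(1 - Complex.exp (((θ / 16 : ℝ) : ℂ) * Complex.I))‖ ≤ 2 * (|θ| / 16) := by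
        rw [← norm_neg, neg_sub]
        have h1 : ‖(((θ / 16 : ℝ) : ℂ) * Complex.I)‖ ≤ 1 := by
          rw [harg]
          have := Real.pi_le_four
          calc |θ| / 16 ≤ Real.pi / 16 := by linarith [hθpi]
            _ ≤ 1 := by linarith
        have := Complex.norm_exp_sub_one_le h1
        rwa [harg] at this
      have hpi : |θ| / 8 ≤ 1/2 := by
        have := Real.pi_le_four
        calc |θ| / 8 ≤ Real.pi / 8 := by linarith [hθpi]
          _ ≤ 1/2 := by linarith
      calc r * ‖(1 - Complex.exp (((θ / 16 : ℝ) : ℂ) * Complex.I))‖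
          ≤ r * (2 * (|θ| / 16)) := by nlinarith [hexp, hr.le]
        _ = |θ| / 8 * r := by ring
        _ ≤ 1/2 * r := by nlinarith
    have hangular : |G z - G z''| ≤ 16 * (C₀/2) := by
      have hchain := my_chain_bound (fun j => G (w j)) (C₀/2) 16 (by
        intro j _
        have hwj0 : w j ≠ 0 := by
          intro hc
          have := habsw j
          rw [hc] at this; simp at this; linarith
        have hwj10 : w (j+1) ≠ 0 := by
          intro hc
          have := habsw (j+1)
          rw [hc] at this; simp at this; linarith
        have := H (w j) (w (j+1)) hwj0 hwj10 (by rw [habsw]; exact hwstep j)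
          (by rw [habsw, habsw])
        refine le_trans this ?_
        rw [habsw, div_le_iff₀ hr]
        nlinarith [hwstep j])
      simpa [hw0, hw16] using hchain
    have htotal : |G z - G z'| ≤ |G z - G z''| + |G z'' - G z'| := abs_sub_le _ _ _
    have hfinal : |G z - G z'| ≤ C₀ * (t + 17/2) := by
      have h1 : |G z'' - G z'| ≤ n * (C₀/2) := by rwa [abs_sub_comm] at hradial
      calc |G z - G z'| ≤ 16 * (C₀/2) + n * (C₀/2) := by linarith [hangular, h1]
        _ ≤ 16 * (C₀/2) + (2*t+1) * (C₀/2) := by nlinarith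
        _ = C₀ * (t + 17/2) := by ring
    refine le_trans hfinal ?_
    have hgoal : 100 * C₀ * d / r = 100 * C₀ * t := by
      rw [htdef]; field_simp
    rw [hgoal]
    nlinarith

set_option maxHeartbeats 1000000 in
theorem stmt_11 :
    ∃ C : ℝ, 0 < C ∧
      ∀ (x : EuclideanSpace ℝ (Fin 2)) (C₀ : ℝ) (g : EuclideanSpace ℝ (Fin 2) → ℝ),
        0 < C₀ →
        (∀ y y' : EuclideanSpace ℝ (Fin 2), y ≠ x → y' ≠ x →
          dist y y' ≤ 1 / 2 * dist x y → dist x y ≤ dist x y' →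
          |g y - g y'| ≤ C₀ * dist y y' / dist x y) →
        ∀ y y' : EuclideanSpace ℝ (Fin 2), y ≠ x → y' ≠ x → dist x y ≤ dist x y' →
          |g y - g y'| ≤ C * C₀ * dist y y' / dist x y := by
  refine ⟨100, by norm_num, ?_⟩
  intro x C₀ g hC₀ hloc y y' hy hy' hdist
  set e := Complex.isometryOfOrthonormal (EuclideanSpace.basisFun (Fin 2) ℝ) with hedef
  set G : ℂ → ℝ := fun w => g (x + e w) with hGdef
  have hdist1 : ∀ z w : ℂ, dist (x + e z) (x + e w) = ‖(z - w)‖ := by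
    intro z w
    rw [dist_add_left, e.dist_map, Complex.dist_eq]
  have hdist2 : ∀ z : ℂ, dist x (x + e z) = ‖z‖ := by
    intro z
    rw [dist_self_add_right, e.norm_map]
  have hne : ∀ z : ℂ, z ≠ 0 → x + e z ≠ x := by
    intro z hz hc
    apply hz
    have : e z = 0 := by
      have := hc
      rwa [add_eq_left] at this
    simpa using this
  have H : ∀ z z' : ℂ, z ≠ 0 → z' ≠ 0 → ‖(z - z')‖ ≤ 1/2 * ‖z‖ →
      ‖z‖ ≤ ‖z'‖ →
      |G z - G z'| ≤ C₀ * ‖(z - z')‖ / ‖z‖ := by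
    intro z z' hz hz' h1 h2
    have := hloc (x + e z) (x + e z') (hne z hz) (hne z' hz')
      (by rw [hdist1, hdist2]; exact h1) (by rw [hdist2, hdist2]; exact h2)
    rwa [hdist1, hdist2] at this
  set z := e.symm (y - x) with hzdef
  set z' := e.symm (y' - x) with hz'def
  have hez : x + e z = y := by rw [hzdef]; simp
  have hez' : x + e z' = y' := by rw [hz'def]; simp
  have hz0 : z ≠ 0 := by
    intro hc
    apply hy
    have : y - x = 0 := by
      have := congrArg e hc
      simpa [hzdef] using this
    rw [sub_eq_zero] at this; exact this
  have hz'0 : z' ≠ 0 := by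
    intro hc
    apply hy'
    have : y' - x = 0 := by
      have := congrArg e hc
      simpa [hz'def] using this
    rw [sub_eq_zero] at this; exact this
  have hle : ‖z‖ ≤ ‖z'‖ := by
    rw [← hdist2 z, ← hdist2 z', hez, hez']; exact hdist
  have := my_key C₀ hC₀ G H z z' hz0 hz'0 hle
  rw [hGdef] at this
  simp only [hez, hez'] at this
  rwa [← hdist1 z z', ← hdist2 z, hez, hez'] at this
end

section
/- Define G(x,y) := (1/(4π)) log((1 − 2⟨x,y⟩ + |x|²|y|²)/|x−y|²) for x, y ∈ ℝ² with x ≠ y. Then for all x, y, y' in the closed unit disk of ℝ² with y ≠ x, y' ≠ x, and |y−y'| ≤ (1/2)|x−y|, one has |G(x,y) − G(x,y')| ≤ (2/π) |y−y'| / |x−y|. -/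
open Real
open scoped RealInnerProductSpace

lemma aux_log_diff {a b c : ℝ} (hc : 0 < c) (ha : c ≤ a) (hb : c ≤ b) :
    |Real.log a - Real.log b| ≤ |a - b| / c := by
  have ha0 : 0 < a := hc.trans_le ha
  have hb0 : 0 < b := hc.trans_le hb
  rcases le_total b a with h | h
  · rw [abs_of_nonneg (sub_nonneg.2 (Real.log_le_log hb0 h)),
      abs_of_nonneg (sub_nonneg.2 h), ← Real.log_div ha0.ne' hb0.ne']
    have h1 : Real.log (a / b) ≤ a / b - 1 := Real.log_le_sub_one_of_pos (div_pos ha0 hb0)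
    have h2 : a / b - 1 = (a - b) / b := by field_simp
    have h3 : (a - b) / b ≤ (a - b) / c := by gcongr
    linarith
  · rw [abs_sub_comm, abs_sub_comm a b]
    rw [abs_of_nonneg (sub_nonneg.2 (Real.log_le_log ha0 h)),
      abs_of_nonneg (sub_nonneg.2 h), ← Real.log_div hb0.ne' ha0.ne']
    have h1 : Real.log (b / a) ≤ b / a - 1 := Real.log_le_sub_one_of_pos (div_pos hb0 ha0)
    have h2 : b / a - 1 = (b - a) / a := by field_simp
    have h3 : (b - a) / a ≤ (b - a) / c := by gcongr
    linarith

theorem stmt_17 (G : EuclideanSpace ℝ (Fin 2) → EuclideanSpace ℝ (Fin 2) → ℝ)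
    (hG : ∀ x y : EuclideanSpace ℝ (Fin 2), x ≠ y →
      G x y = 1 / (4 * π) *
        Real.log ((1 - 2 * ⟪x, y⟫ + ‖x‖ ^ 2 * ‖y‖ ^ 2) / ‖x - y‖ ^ 2)) :
    ∀ x y y' : EuclideanSpace ℝ (Fin 2), ‖x‖ ≤ 1 → ‖y‖ ≤ 1 → ‖y'‖ ≤ 1 →
      y ≠ x → y' ≠ x → ‖y - y'‖ ≤ 1 / 2 * ‖x - y‖ →
      |G x y - G x y'| ≤ 2 / π * ‖y - y'‖ / ‖x - y‖ := by
  intro x y y' hx hy hy' hyx hy'x hr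
  classical
  have hπ : 0 < π := Real.pi_pos
  have hxy : x ≠ y := fun h => hyx h.symm
  have hxy' : x ≠ y' := fun h => hy'x h.symm
  have hr0 : (0:ℝ) ≤ ‖y - y'‖ := norm_nonneg _
  have hdy : 0 < ‖x - y‖ := norm_sub_pos_iff.2 hxy
  have hdy'0 : 0 < ‖x - y'‖ := norm_sub_pos_iff.2 hxy'
  have htri : |‖x - y‖ - ‖x - y'‖| ≤ ‖y - y'‖ := by
    have h1 := abs_norm_sub_norm_le (x - y) (x - y')
    have h2 : (x - y) - (x - y') = y' - y := by abel
    rw [h2, norm_sub_rev y' y] at h1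
    exact h1
  have hdy' : ‖x - y‖ / 2 ≤ ‖x - y'‖ := by
    have := abs_le.1 htri
    linarith [this.2]
  set m : EuclideanSpace ℝ (Fin 2) → ℝ :=
    fun z => if x = 0 then 1 else ‖(‖x‖ : ℝ) • z - (‖x‖⁻¹ : ℝ) • x‖ with hm
  have hm_sq : ∀ z : EuclideanSpace ℝ (Fin 2),
      (m z) ^ 2 = 1 - 2 * ⟪x, z⟫ + ‖x‖ ^ 2 * ‖z‖ ^ 2 := by
    intro z
    by_cases h0 : x = 0
    · simp [hm, h0]
    · have hnx : ‖x‖ ≠ 0 := norm_ne_zero_iff.2 h0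
      simp only [hm, if_neg h0]
      have hi : ⟪(‖x‖ : ℝ) • z, (‖x‖⁻¹ : ℝ) • x⟫ = ⟪x, z⟫ := by
        rw [real_inner_smul_left, real_inner_smul_right, real_inner_comm]
        field_simp
      rw [norm_sub_sq_real, hi, norm_smul, norm_smul, Real.norm_eq_abs,
        abs_of_nonneg (norm_nonneg x), Real.norm_eq_abs,
        abs_of_nonneg (inv_nonneg.2 (norm_nonneg x))]
      rw [mul_pow, mul_pow, inv_pow]
      field_simp
      ring
  have hm_nonneg : ∀ z, 0 ≤ m z := by
    intro z
    by_cases h0 : x = 0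
    · simp [hm, h0]
    · simp only [hm, if_neg h0]; exact norm_nonneg _
  have hm_ge : ∀ z : EuclideanSpace ℝ (Fin 2), ‖z‖ ≤ 1 → ‖x - z‖ ≤ m z := by
    intro z hz
    have h1 : ‖x - z‖ ^ 2 ≤ (m z) ^ 2 := by
      rw [hm_sq z, norm_sub_sq_real]
      nlinarith [norm_nonneg x, norm_nonneg z, hx, hz,
        mul_nonneg (sub_nonneg.2 hx) (sub_nonneg.2 hz)]
    exact le_of_pow_le_pow_left₀ two_ne_zero (hm_nonneg z) h1
  have hm_lip : |m y - m y'| ≤ ‖y - y'‖ := by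
    by_cases h0 : x = 0
    · simp [hm, h0, hr0]
    · simp only [hm, if_neg h0]
      have h1 := abs_norm_sub_norm_le ((‖x‖ : ℝ) • y - (‖x‖⁻¹ : ℝ) • x)
        ((‖x‖ : ℝ) • y' - (‖x‖⁻¹ : ℝ) • x)
      have h2 : ((‖x‖ : ℝ) • y - (‖x‖⁻¹ : ℝ) • x) - ((‖x‖ : ℝ) • y' - (‖x‖⁻¹ : ℝ) • x)
          = (‖x‖ : ℝ) • (y - y') := by
        rw [smul_sub]; abel
      rw [h2, norm_smul, Real.norm_eq_abs, abs_of_nonneg (norm_nonneg x)] at h1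
      calc |‖(‖x‖ : ℝ) • y - (‖x‖⁻¹ : ℝ) • x‖ - ‖(‖x‖ : ℝ) • y' - (‖x‖⁻¹ : ℝ) • x‖|
          ≤ ‖x‖ * ‖y - y'‖ := h1
        _ ≤ 1 * ‖y - y'‖ := by gcongr
        _ = ‖y - y'‖ := one_mul _
  have hmy : 0 < m y := hdy.trans_le (hm_ge y hy)
  have hmy' : 0 < m y' := hdy'0.trans_le (hm_ge y' hy')
  have hGy : G x y = 1 / (2 * π) * (Real.log (m y) - Real.log ‖x - y‖) := by
    rw [hG x y hxy, ← hm_sq y,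
      Real.log_div (pow_ne_zero 2 hmy.ne') (pow_ne_zero 2 hdy.ne'),
      Real.log_pow, Real.log_pow]
    push_cast
    field_simp
    ring
  have hGy' : G x y' = 1 / (2 * π) * (Real.log (m y') - Real.log ‖x - y'‖) := by
    rw [hG x y' hxy', ← hm_sq y',
      Real.log_div (pow_ne_zero 2 hmy'.ne') (pow_ne_zero 2 hdy'0.ne'),
      Real.log_pow, Real.log_pow]
    push_cast
    field_simp
    ring
  have hc : 0 < ‖x - y‖ / 2 := by linarith
  have hL1 : |Real.log (m y) - Real.log (m y')| ≤ ‖y - y'‖ / (‖x - y‖ / 2) := by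
    have h := aux_log_diff (a := m y) (b := m y') hc (le_trans (by linarith) (hm_ge y hy))
      (le_trans hdy' (hm_ge y' hy'))
    exact h.trans (by gcongr)
  have hL2 : |Real.log ‖x - y‖ - Real.log ‖x - y'‖| ≤ ‖y - y'‖ / (‖x - y‖ / 2) := by
    have h := aux_log_diff (a := ‖x - y‖) (b := ‖x - y'‖) hc (by linarith) hdy'
    exact h.trans (by gcongr)
  rw [hGy, hGy']
  have heq : 1 / (2 * π) * (Real.log (m y) - Real.log ‖x - y‖)
      - 1 / (2 * π) * (Real.log (m y') - Real.log ‖x - y'‖)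
      = 1 / (2 * π) * ((Real.log (m y) - Real.log (m y'))
        - (Real.log ‖x - y‖ - Real.log ‖x - y'‖)) := by ring
  rw [heq, abs_mul, abs_of_nonneg (by positivity : (0:ℝ) ≤ 1 / (2 * π))]
  have habs : |(Real.log (m y) - Real.log (m y'))
      - (Real.log ‖x - y‖ - Real.log ‖x - y'‖)|
      ≤ ‖y - y'‖ / (‖x - y‖ / 2) + ‖y - y'‖ / (‖x - y‖ / 2) := by
    calc |(Real.log (m y) - Real.log (m y'))
        - (Real.log ‖x - y‖ - Real.log ‖x - y'‖)|
        ≤ |Real.log (m y) - Real.log (m y')|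
          + |Real.log ‖x - y‖ - Real.log ‖x - y'‖| := abs_sub _ _
      _ ≤ _ := add_le_add hL1 hL2
  calc 1 / (2 * π) * |(Real.log (m y) - Real.log (m y'))
      - (Real.log ‖x - y‖ - Real.log ‖x - y'‖)|
      ≤ 1 / (2 * π) * (‖y - y'‖ / (‖x - y‖ / 2) + ‖y - y'‖ / (‖x - y‖ / 2)) := by
        gcongr
    _ = 2 / π * ‖y - y'‖ / ‖x - y‖ := by
        field_simp
        ring
end
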